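/- arXiv:2003.09253 — 2 statements merged into one kernel-verified Lean document; each statement's English description precedes it below -/
import Mathlib

section
/- Let f(s,λ) = 1 + λ G(s) e^{-hs} and let s_cr = σ₀ + j ω_cr satisfy f(s_cr, λ_cr) = 0 with λ_cr > 0, ∂f/∂s(s_cr,λ_cr) ≠ 0. Then the crossing direction sgn(Re(-(∂f/∂λ)/(∂f/∂s))) at (s_cr, λ_cr) equals -sgn(φ'(ω_cr)), where φ is the continuous phase of G(σ₀+jω)e^{-h(σ₀+jω)}; in particular it depends only on ω_cr and not on λ_cr. -/
open Complex

/-- Theorem 4: the crossing direction of a boundary crossing root equals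
−sgn(φ'(ω_cr)), where φ'(ω_cr) = Re(G'(s_cr)/G(s_cr) − h). -/
theorem stmt_9 (G : ℂ → ℂ) (h σ₀ ω_cr lam : ℝ) (hh : 0 < h) (hlam : 0 < lam)
    (s_cr : ℂ) (hs : s_cr = (σ₀ : ℂ) + (ω_cr : ℂ) * Complex.I)
    (hG : DifferentiableAt ℂ G s_cr) (hGne : G s_cr ≠ 0)
    (hroot : 1 + (lam : ℂ) * G s_cr * Complex.exp (-(h : ℂ) * s_cr) = 0)
    (hfs : deriv G s_cr - (h : ℂ) * G s_cr ≠ 0)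
    (hφ' : (deriv G s_cr / G s_cr - (h : ℂ)).re ≠ 0) :
    Real.sign
      ((-((G s_cr * Complex.exp (-(h : ℂ) * s_cr)) /
          ((lam : ℂ) * (deriv G s_cr - (h : ℂ) * G s_cr) *
            Complex.exp (-(h : ℂ) * s_cr)))).re)
      = -Real.sign ((deriv G s_cr / G s_cr - (h : ℂ)).re) := by
  set z : ℂ := deriv G s_cr / G s_cr - (h : ℂ) with hz
  have hlamne : (lam : ℂ) ≠ 0 := by exact_mod_cast hlam.ne'
  have hexp : Complex.exp (-(h : ℂ) * s_cr) ≠ 0 := Complex.exp_ne_zero _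
  have hzG : G s_cr * z = deriv G s_cr - (h : ℂ) * G s_cr := by
    rw [hz]; field_simp <;> ring
  have hzne : z ≠ 0 := by
    intro h0
    apply hfs
    rw [← hzG, h0, mul_zero]
  have key : -((G s_cr * Complex.exp (-(h : ℂ) * s_cr)) /
          ((lam : ℂ) * (deriv G s_cr - (h : ℂ) * G s_cr) *
            Complex.exp (-(h : ℂ) * s_cr))) = -((lam : ℂ)⁻¹ * z⁻¹) := by
    rw [← hzG]
    field_simp
  rw [key]
  have hre : (-((lam : ℂ)⁻¹ * z⁻¹)).re = -(lam⁻¹ * (z.re / Complex.normSq z)) := by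
    simp [Complex.neg_re, Complex.inv_re, ← Complex.ofReal_inv]
  rw [hre]
  have hnormSq : 0 < Complex.normSq z := Complex.normSq_pos.2 hzne
  have hlaminv : 0 < lam⁻¹ := inv_pos.2 hlam
  rcases hφ'.lt_or_gt with hneg | hpos
  · have h1 : 0 < -(lam⁻¹ * (z.re / Complex.normSq z)) := by
      have : z.re / Complex.normSq z < 0 := div_neg_of_neg_of_pos hneg hnormSq
      nlinarith
    rw [Real.sign_of_pos h1, Real.sign_of_neg hneg]
    norm_num
  · have h1 : -(lam⁻¹ * (z.re / Complex.normSq z)) < 0 := by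
      have : 0 < z.re / Complex.normSq z := div_pos hpos hnormSq
      nlinarith
    rw [Real.sign_of_neg h1, Real.sign_of_pos hpos]
end

section
/- Suppose G is biproper with d := lim_{|s|→∞} G(s) ≠ 0, h > 0, σ₀ < 0, and 0 < λ < e^{h σ₀}/|d|. Then there exists R > 0 such that every root s of 1 + λ G(s) e^{-hs} = 0 with Re(s) ≥ σ₀ satisfies |s| ≤ R; in particular the root-locus region {Re(s) ≥ σ₀} contains only finitely many roots. -/
open Complex Finset Filter Bornology Topology

/-- Remark 2: for a biproper plant and λ < e^{hσ₀}/|d|, all roots in the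
half-plane Re(s) ≥ σ₀ lie in a bounded set, and there are finitely many. -/
theorem stmt_14 (n : ℕ) (α : ℝ) (hα : α ≠ 0) (h σ₀ lam : ℝ)
    (hh : 0 < h) (hσ₀ : σ₀ < 0)
    (hlam : 0 < lam) (hlam' : lam < Real.exp (h * σ₀) / |α|)
    (z p : Fin n → ℂ)
    (G : ℂ → ℂ)
    (hG : ∀ s : ℂ, G s = (α : ℂ) * (∏ r, (s - z r)) / ∏ i, (s - p i)) :
    (∃ R > 0, ∀ s : ℂ, σ₀ ≤ s.re →
        1 + (lam : ℂ) * G s * Complex.exp (-(h : ℂ) * s) = 0 →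
        ‖s‖ ≤ R) ∧
    Set.Finite {s : ℂ | σ₀ ≤ s.re ∧
        1 + (lam : ℂ) * G s * Complex.exp (-(h : ℂ) * s) = 0} := by
  have habs : (0:ℝ) < |α| := abs_pos.mpr hα
  set c := Real.exp (h * σ₀) / lam with hc
  have hαc : |α| < c := by
    rw [hc, lt_div_iff₀ hlam]
    rw [lt_div_iff₀ habs] at hlam'
    nlinarith
  -- G tends to α along cobounded
  have hfac : ∀ r : Fin n, Tendsto (fun s : ℂ => (s - z r) / (s - p r))
      (cobounded ℂ) (𝓝 1) := by
    intro r
    have t1 : Tendsto (fun s : ℂ => (s - p r)⁻¹) (cobounded ℂ) (𝓝 0) := by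
      have : Tendsto (fun s : ℂ => s - p r) (cobounded ℂ) (cobounded ℂ) := by
        rw [← tendsto_norm_atTop_iff_cobounded]
        refine tendsto_atTop_mono (fun s => norm_sub_norm_le s (p r)) ?_
        exact tendsto_atTop_add_const_right _ (-‖p r‖) tendsto_norm_cobounded_atTop
      exact tendsto_inv₀_cobounded.comp this
    have t2 : Tendsto (fun s : ℂ => 1 + (p r - z r) * (s - p r)⁻¹)
        (cobounded ℂ) (𝓝 (1 + (p r - z r) * 0)) :=
      tendsto_const_nhds.add (tendsto_const_nhds.mul t1)
    rw [mul_zero, add_zero] at t2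
    refine t2.congr' ?_
    filter_upwards [tendsto_norm_cobounded_atTop.eventually
      (eventually_gt_atTop ‖p r‖)] with s hs
    have hne : s - p r ≠ 0 := by
      intro hcon
      rw [sub_eq_zero] at hcon
      simp [hcon] at hs
    field_simp
    ring
  have hGt : Tendsto G (cobounded ℂ) (𝓝 (α : ℂ)) := by
    have t3 : Tendsto (fun s : ℂ => (α:ℂ) * ∏ r, (s - z r) / (s - p r))
        (cobounded ℂ) (𝓝 ((α:ℂ) * ∏ _r : Fin n, 1)) :=
      tendsto_const_nhds.mul (tendsto_finset_prod _ fun r _ => hfac r)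
    simp only [Finset.prod_const_one, mul_one] at t3
    refine t3.congr (fun s => ?_)
    rw [hG s, Finset.prod_div_distrib, mul_div_assoc]
  have hGabs : Tendsto (fun s => ‖G s‖) (cobounded ℂ) (𝓝 |α|) := by
    have := (continuous_norm.tendsto _).comp hGt
    simpa [Function.comp_def] using this
  have hev : ∀ᶠ s in cobounded ℂ, ‖G s‖ < c :=
    hGabs.eventually_lt_const hαc
  rw [← comap_norm_atTop] at hev
  obtain ⟨b, hb⟩ := (eventually_atTop).1 (eventually_comap.1 hev)
  set R := max b 1 with hR
  have hRpos : (0:ℝ) < R := lt_of_lt_of_le one_pos (le_max_right _ _)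
  -- the modulus identity at a root
  have key : ∀ s : ℂ, σ₀ ≤ s.re →
      1 + (lam : ℂ) * G s * Complex.exp (-(h : ℂ) * s) = 0 →
      ‖s‖ ≤ R := by
    intro s hs heq
    by_contra hcon
    push_neg at hcon
    have hbs : b ≤ ‖s‖ := le_trans (le_max_left b 1) hcon.le
    have hlt : ‖G s‖ < c := hb ‖s‖ hbs s rfl
    have heq2 : (lam : ℂ) * G s * Complex.exp (-(h : ℂ) * s) = -1 := by
      linear_combination heq
    have habs2 : lam * ‖G s‖ * Real.exp (-(h * s.re)) = 1 := by
      have := congrArg (‖·‖) heq2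
      simpa [norm_mul, Complex.norm_exp, Complex.norm_real, abs_of_pos hlam,
        Complex.neg_re, Complex.mul_re, Complex.ofReal_re, Complex.ofReal_im] using this
    have hGval : ‖G s‖ = Real.exp (h * s.re) / lam := by
      have hexp : Real.exp (-(h * s.re)) ≠ 0 := Real.exp_ne_zero _
      field_simp [Real.exp_neg] at habs2 ⊢
      have hEE : Real.exp (h * s.re) * Real.exp (-(h * s.re)) = 1 := by
        rw [← Real.exp_add]; simp
      linear_combination (Real.exp (h * s.re)) * habs2 - (lam * ‖G s‖) * hEE
    have hcle : c ≤ ‖G s‖ := by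
      rw [hGval, hc]
      gcongr
    linarith
  refine ⟨⟨R, hRpos, key⟩, ?_⟩
  set S := {s : ℂ | σ₀ ≤ s.re ∧ 1 + (lam:ℂ) * G s * Complex.exp (-(h:ℂ)*s) = 0} with hSdef
  set F := fun s : ℂ => (∏ i, (s - p i)) +
      (lam:ℂ) * α * (∏ r, (s - z r)) * Complex.exp (-(h:ℂ)*s) with hFdef
  have hFdiff : Differentiable ℂ F := by
    refine Differentiable.add ?_ ?_
    · exact Differentiable.fun_finsetProd
        (fun i _ => differentiable_id.sub (differentiable_const _))
    · exact (((differentiable_const _).mul (Differentiable.fun_finsetProd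
        (fun i _ => differentiable_id.sub (differentiable_const _)))).mul
        ((differentiable_const _).mul differentiable_id).cexp)
  have hFan : AnalyticOnNhd ℂ F Set.univ := analyticOnNhd_univ_iff_differentiable.2 hFdiff
  have hFzero : ∀ s ∈ S, F s = 0 := by
    intro s hsS
    obtain ⟨-, heq⟩ := hsS
    have hD : (∏ i, (s - p i)) ≠ 0 := by
      intro hD0
      rw [hG s, hD0, div_zero] at heq
      simp at heq
    rw [hG s] at heq
    field_simp at heq
    rw [hFdef]
    show _ + _ = 0
    rw [neg_mul]
    rw [mul_comm s (h:ℂ)] at heq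
    linear_combination heq
  have hwit : ∃ x : ℂ, F x ≠ 0 := by
    have ht1 : Tendsto (fun t : ℝ => (h*t)^n * Real.exp (-(h*t))) atTop (𝓝 0) := by
      have := (Real.tendsto_pow_mul_exp_neg_atTop_nhds_zero n).comp
        (tendsto_id.const_mul_atTop hh)
      exact this
    have ht2 : Tendsto (fun t : ℝ => (lam * |α| * 2^n / h^n) *
        ((h*t)^n * Real.exp (-(h*t)))) atTop (𝓝 0) := by
      simpa using ht1.const_mul (lam * |α| * 2^n / h^n)
    have hev2 : ∀ᶠ t : ℝ in atTop, (lam * |α| * 2^n / h^n) *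
        ((h*t)^n * Real.exp (-(h*t))) < 1 := ht2.eventually_lt_const one_pos
    obtain ⟨t, htA, htB⟩ := (hev2.and (eventually_ge_atTop (‖z‖ + ‖p‖ + 1))).exists
    have hz0 : (0:ℝ) ≤ ‖z‖ := norm_nonneg _
    have hp0 : (0:ℝ) ≤ ‖p‖ := norm_nonneg _
    have ht0 : (1:ℝ) ≤ t := by linarith
    refine ⟨(t:ℂ), fun hF0 => ?_⟩
    have habsx : ‖(t:ℂ)‖ = t := by
      rw [Complex.norm_real, Real.norm_eq_abs, abs_of_pos (by linarith)]
    have hnt : ‖(t:ℂ)‖ = t := by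
      rw [Complex.norm_real, Real.norm_eq_abs, abs_of_pos (by linarith)]
    have h1 : (1:ℝ) ≤ ‖∏ i, ((t:ℂ) - p i)‖ := by
      rw [norm_prod]
      have hone : ∀ i : Fin n, (1:ℝ) ≤ ‖(t:ℂ) - p i‖ := by
        intro i
        have hpi : ‖p i‖ ≤ ‖p‖ := norm_le_pi_norm p i
        have hsub := norm_sub_norm_le (t:ℂ) (p i)
        linarith [hsub, hnt ▸ hsub]
      calc (1:ℝ) = ∏ _i : Fin n, (1:ℝ) := by simp
      _ ≤ ∏ i, ‖(t:ℂ) - p i‖ :=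
          Finset.prod_le_prod (by simp) (fun i _ => hone i)
    have h2 : ‖(lam:ℂ) * α * (∏ r, ((t:ℂ) - z r)) *
        Complex.exp (-(h:ℂ)*(t:ℂ))‖ < 1 := by
      have hzr : ∀ r : Fin n, ‖(t:ℂ) - z r‖ ≤ 2*t := by
        intro r
        have hzi : ‖z r‖ ≤ ‖z‖ := norm_le_pi_norm z r
        have hsub := norm_sub_le (t:ℂ) (z r)
        rw [hnt] at hsub
        linarith
      have hprod : ‖∏ r, ((t:ℂ) - z r)‖ ≤ (2*t)^n := by
        rw [norm_prod]
        calc ∏ r, ‖(t:ℂ) - z r‖ ≤ ∏ _r : Fin n, (2*t) :=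
              Finset.prod_le_prod (fun r _ => norm_nonneg _)
                (fun r _ => hzr r)
        _ = (2*t)^n := by simp
      have hexpabs : ‖Complex.exp (-(h:ℂ)*(t:ℂ))‖ = Real.exp (-(h*t)) := by
        rw [Complex.norm_exp]
        norm_num
      rw [norm_mul, norm_mul, norm_mul, hexpabs, Complex.norm_real, Complex.norm_real,
        Real.norm_eq_abs, Real.norm_eq_abs, abs_of_pos hlam]
      calc lam * |α| * ‖∏ r, ((t:ℂ) - z r)‖ * Real.exp (-(h*t))
          ≤ lam * |α| * (2*t)^n * Real.exp (-(h*t)) := by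
            gcongr
      _ = lam * |α| * 2^n / h^n * ((h*t)^n * Real.exp (-(h*t))) := by
            rw [mul_pow, mul_pow]
            field_simp
      _ < 1 := htA
    have hF0' : (∏ i, ((t:ℂ) - p i)) + (lam:ℂ) * α * (∏ r, ((t:ℂ) - z r)) *
        Complex.exp (-(h:ℂ)*(t:ℂ)) = 0 := hF0
    have heqn := eq_neg_of_add_eq_zero_left hF0'
    have habseq := congrArg (‖·‖) heqn
    rw [norm_neg] at habseq
    rw [habseq] at h1
    linarith
  rw [← Set.not_infinite]
  intro hinf
  have hsub : S ⊆ Metric.closedBall 0 R := by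
    intro s hsS
    have := key s hsS.1 hsS.2
    simpa [Metric.mem_closedBall, Complex.dist_eq] using this
  obtain ⟨x₀, -, hacc⟩ := hinf.exists_accPt_of_subset_isCompact
    (isCompact_closedBall 0 R) hsub
  rw [accPt_iff_frequently] at hacc
  have hfreq : ∃ᶠ y in 𝓝[≠] x₀, F y = 0 := by
    rw [frequently_nhdsWithin_iff]
    exact hacc.mono (fun y hy => ⟨hFzero y hy.2, hy.1⟩)
  have hall := hFan.eqOn_zero_of_preconnected_of_frequently_eq_zero
    isPreconnected_univ (Set.mem_univ x₀) hfreq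
  obtain ⟨x, hx⟩ := hwit
  exact hx (hall (Set.mem_univ x))
end
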